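/- Let a < b be real numbers, let d > 0, and let n be a positive integer with 2dn > 1; set h = log(2dn)/n (so h > 0). Then h·Σ_{j=−n}^{n} ψ'(jh) ≤ (πd/(2e))·(b−a) + (b−a), where ψ'(u) = ((b−a)π/4)·cosh(u)/cosh²((π/2)·sinh u) and e is Euler's number. -/

import Mathlib

open MeasureTheory Set

noncomputable section

/-- The normalized sinc function on `ℝ`. -/
def rsinc (x : ℝ) : ℝ := if x = 0 then 1 else Real.sin (Real.pi * x) / (Real.pi * x)

/-- `δ_k = 1/2 + ∫_0^k sinc(t) dt`. -/
def deltaK (k : ℤ) : ℝ := 1 / 2 + ∫ t in (0:ℝ)..(k:ℝ), rsinc t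

/-- The single-exponential (SE) transformation. -/
def psiSE (a b u : ℝ) : ℝ := (b - a) / 2 * Real.tanh (u / 2) + (b + a) / 2

/-- Derivative of the SE transformation. -/
def psiSE' (a b u : ℝ) : ℝ := (b - a) / (4 * Real.cosh (u / 2) ^ 2)

/-- Inverse of the SE transformation. -/
def phiSE (a b x : ℝ) : ℝ := Real.log ((x - a) / (b - x))

/-- The double-exponential (DE) transformation. -/
def psiDE (a b u : ℝ) : ℝ :=
  (b - a) / 2 * Real.tanh (Real.pi / 2 * Real.sinh u) + (b + a) / 2

/-- Derivative of the DE transformation. -/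
def psiDE' (a b u : ℝ) : ℝ :=
  (b - a) * Real.pi / 4 * Real.cosh u / Real.cosh (Real.pi / 2 * Real.sinh u) ^ 2

/-- The inverse hyperbolic tangent (not available in Mathlib). -/
def artanh (x : ℝ) : ℝ := 1 / 2 * Real.log ((1 + x) / (1 - x))

/-- Inverse of the DE transformation. -/
def phiDE (a b x : ℝ) : ℝ :=
  Real.arsinh (2 / Real.pi * artanh ((2 * x - a - b) / (b - a)))

/-- The sinc basis term `sinc((φ(x) - kh)/h)`, interpreted as `0` at the endpoints
`x = a` and `x = b` (continuous extension). -/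
def sincTerm (a b : ℝ) (phi : ℝ → ℝ) (h : ℝ) (k : ℤ) (x : ℝ) : ℝ :=
  if x = a ∨ x = b then 0 else rsinc ((phi x - (k : ℝ) * h) / h)

/-- The basis functions `ω_i`, `i ∈ {-n, …, n}`. -/
def omegaF (a b : ℝ) (psi phi : ℝ → ℝ) (n : ℕ) (h : ℝ) (i : ℤ) (x : ℝ) : ℝ :=
  if i = -(n : ℤ) then
    (1 / ((b - psi (-(n : ℝ) * h)) / (b - a))) *
      ((b - x) / (b - a) -
        ∑ k ∈ Finset.Icc (-(n : ℤ) + 1) (n : ℤ),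
          (b - psi ((k : ℝ) * h)) / (b - a) * sincTerm a b phi h k x)
  else if i = (n : ℤ) then
    (1 / ((psi ((n : ℝ) * h) - a) / (b - a))) *
      ((x - a) / (b - a) -
        ∑ k ∈ Finset.Icc (-(n : ℤ)) ((n : ℤ) - 1),
          (psi ((k : ℝ) * h) - a) / (b - a) * sincTerm a b phi h k x)
  else sincTerm a b phi h i x

/-- The Sinc indefinite integration operator, as a pointwise formula:
`(𝒥_m g)(x) = Σ_i (h Σ_j δ_{i-j} g(ψ(jh)) ψ'(jh)) ω_i(x)`. -/
def JmF (a b : ℝ) (psi psi' phi : ℝ → ℝ) (n : ℕ) (h : ℝ) (g : ℝ → ℂ) (x : ℝ) : ℂ :=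
  ∑ i ∈ Finset.Icc (-(n : ℤ)) (n : ℤ),
    ((h : ℂ) * ∑ j ∈ Finset.Icc (-(n : ℤ)) (n : ℤ),
        (deltaK (i - j) : ℂ) * g (psi ((j : ℝ) * h)) * (psi' ((j : ℝ) * h) : ℂ)) *
      (omegaF a b psi phi n h i x : ℂ)

/-- The `m × m` matrix `A_m`, `(A_m)_{ij} = h δ_{i-j} ψ'(jh)`, indices shifted to
`Fin (2n+1)`. -/
def AmF (psi' : ℝ → ℝ) (n : ℕ) (h : ℝ) : Matrix (Fin (2*n+1)) (Fin (2*n+1)) ℂ :=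
  Matrix.of fun i j =>
    ((h * deltaK ((((i : ℕ) : ℤ) - (n : ℤ)) - (((j : ℕ) : ℤ) - (n : ℤ))) *
        psi' ((((((j : ℕ) : ℤ) - (n : ℤ)) : ℤ) : ℝ) * h) : ℝ) : ℂ)

/-- The strip `D_d = {ζ : |Im ζ| < d}`. -/
def strip (d : ℝ) : Set ℂ := {z : ℂ | |z.im| < d}

/-- Holomorphic extension of the SE transformation. -/
def psiSEC (a b : ℝ) (z : ℂ) : ℂ :=
  ((b - a) / 2 : ℂ) * Complex.tanh (z / 2) + ((b + a) / 2 : ℂ)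

/-- The image `ψ(D_d)` of the strip under the SE transformation. -/
def seDomain (a b d : ℝ) : Set ℂ := psiSEC a b '' strip d

end

lemma hasDerivAt_my_tanh (x : ℝ) :
    HasDerivAt Real.tanh (1 / Real.cosh x ^ 2) x := by
  have h := (Real.hasDerivAt_sinh x).div (Real.hasDerivAt_cosh x) (Real.cosh_pos x).ne'
  have heq : (fun y => Real.sinh y / Real.cosh y) = Real.tanh := by
    funext y; rw [Real.tanh_eq_sinh_div_cosh]
  rw [show (Real.sinh / Real.cosh) = Real.tanh from heq] at h
  refine h.congr_deriv ?_
  have h2 := Real.cosh_sq_sub_sinh_sq x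
  field_simp
  nlinarith [h2]

lemma hasDerivAt_psiDE (a b u : ℝ) :
    HasDerivAt (fun u => (b - a) / 2 * Real.tanh (Real.pi / 2 * Real.sinh u))
      (psiDE' a b u) u := by
  have inner : HasDerivAt (fun u => Real.pi / 2 * Real.sinh u) (Real.pi / 2 * Real.cosh u) u :=
    (Real.hasDerivAt_sinh u).const_mul _
  have hT := ((hasDerivAt_my_tanh (Real.pi / 2 * Real.sinh u)).comp u inner).const_mul ((b - a) / 2)
  have e : psiDE' a b u = (b - a) / 2 * (1 / Real.cosh (Real.pi / 2 * Real.sinh u) ^ 2 * (Real.pi / 2 * Real.cosh u)) := by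
    unfold psiDE'; ring
  rw [e]; exact hT

lemma hasDerivAt_psiDE' (a b u : ℝ) :
    HasDerivAt (psiDE' a b)
      (((b - a) * Real.pi / 4 * Real.sinh u * Real.cosh (Real.pi / 2 * Real.sinh u) ^ 2 -
        (b - a) * Real.pi / 4 * Real.cosh u *
          (2 * Real.cosh (Real.pi / 2 * Real.sinh u) ^ 1 *
            (Real.sinh (Real.pi / 2 * Real.sinh u) * (Real.pi / 2 * Real.cosh u)))) /
        (Real.cosh (Real.pi / 2 * Real.sinh u) ^ 2) ^ 2) u := by
  have inner : HasDerivAt (fun u => Real.pi / 2 * Real.sinh u) (Real.pi / 2 * Real.cosh u) u :=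
    (Real.hasDerivAt_sinh u).const_mul _
  have hN : HasDerivAt (fun u => (b - a) * Real.pi / 4 * Real.cosh u)
      ((b - a) * Real.pi / 4 * Real.sinh u) u := (Real.hasDerivAt_cosh u).const_mul _
  have hC : HasDerivAt (fun u => Real.cosh (Real.pi / 2 * Real.sinh u))
      (Real.sinh (Real.pi / 2 * Real.sinh u) * (Real.pi / 2 * Real.cosh u)) u :=
    (Real.hasDerivAt_cosh _).comp u inner
  have hD := hC.pow 2
  have hpos : (Real.cosh (Real.pi / 2 * Real.sinh u)) ^ 2 ≠ 0 :=
    (pow_pos (Real.cosh_pos _) 2).ne'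
  have := hN.div hD hpos
  refine this.congr_deriv ?_
  norm_num [Pi.pow_apply]

lemma deriv_psiDE'_nonpos (a b : ℝ) (hab : a < b) {u : ℝ} (hu : 0 ≤ u) :
    deriv (psiDE' a b) u ≤ 0 := by
  rw [(hasDerivAt_psiDE' a b u).deriv]
  set X := Real.pi / 2 * Real.sinh u with hX
  have hXnn : 0 ≤ X := mul_nonneg (by positivity) (Real.sinh_nonneg_iff.mpr hu)
  have hS : X ≤ Real.sinh X := Real.self_le_sinh_iff.mpr hXnn
  have hCS : Real.cosh X ≤ Real.sinh X + 1 := by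
    have := Real.cosh_sub_sinh X
    have hexp : Real.exp (-X) ≤ 1 := Real.exp_le_one_iff.mpr (by linarith)
    linarith
  have hpi : 3 < Real.pi := Real.pi_gt_three
  have hCX : 0 < Real.cosh X := Real.cosh_pos X
  have hSX : 0 ≤ Real.sinh X := Real.sinh_nonneg_iff.mpr hXnn
  have hba : 0 < b - a := by linarith
  apply div_nonpos_of_nonpos_of_nonneg _ (by positivity)
  set s := Real.sinh u with hsdef
  have hs : 0 ≤ s := Real.sinh_nonneg_iff.mpr hu
  have hcu : Real.cosh u ^ 2 = 1 + s ^ 2 := by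
    have := Real.cosh_sq_sub_sinh_sq u; linarith
  have key : s * Real.cosh X ≤ Real.pi * Real.cosh u ^ 2 * Real.sinh X := by
    have h1 : s * Real.cosh X ≤ s * (Real.sinh X + 1) := mul_le_mul_of_nonneg_left hCS hs
    have h2 : 3 * (1 + s ^ 2) * Real.sinh X ≤ Real.pi * Real.cosh u ^ 2 * Real.sinh X := by
      rw [hcu]
      nlinarith [mul_nonneg (mul_nonneg (by linarith : (0:ℝ) ≤ Real.pi - 3)
        (by positivity : (0:ℝ) ≤ 1 + s ^ 2)) hSX]
    have h3 : (3 : ℝ) / 2 * s ≤ Real.sinh X := by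
      nlinarith
    have h4 : (0:ℝ) ≤ 3 + 3 * s ^ 2 - s := by nlinarith [sq_nonneg (s - 1)]
    have h5 : (0:ℝ) ≤ (Real.sinh X - 3/2 * s) * (3 + 3 * s ^ 2 - s) :=
      mul_nonneg (by linarith) h4
    nlinarith [mul_nonneg hs hs, mul_nonneg (mul_nonneg hs hs) hs]
  have hmul := mul_le_mul_of_nonneg_left (mul_le_mul_of_nonneg_right key hCX.le)
    (show (0:ℝ) ≤ (b - a) * Real.pi / 4 by positivity)
  nlinarith [hmul]

lemma antitoneOn_psiDE' (a b : ℝ) (hab : a < b) : AntitoneOn (psiDE' a b) (Set.Ici 0) := by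
  apply antitoneOn_of_deriv_nonpos (convex_Ici 0)
  · exact (Differentiable.continuous fun x =>
      (hasDerivAt_psiDE' a b x).differentiableAt).continuousOn
  · exact fun x _ => (hasDerivAt_psiDE' a b x).differentiableAt.differentiableWithinAt
  · intro x hx
    rw [interior_Ici] at hx
    exact deriv_psiDE'_nonpos a b hab (le_of_lt hx)

lemma psiDE'_even (a b u : ℝ) : psiDE' a b (-u) = psiDE' a b u := by
  simp [psiDE', Real.sinh_neg, Real.cosh_neg, mul_neg]

lemma psiDE'_zero (a b : ℝ) : psiDE' a b 0 = (b - a) * Real.pi / 4 := by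
  simp [psiDE']


/-- `h Σ_{j=-n}^{n} ψ'(jh) ≤ (πd/(2e))·(b-a) + (b-a)` for the DE
transformation with `h = log(2dn)/n`. -/
theorem stmt_19 (a b : ℝ) (hab : a < b) (d : ℝ) (hd : 0 < d) (n : ℕ) (hn : 1 ≤ n)
    (h2dn : 1 < 2 * d * n) :
    (Real.log (2 * d * n) / n) *
        ∑ j ∈ Finset.Icc (-(n : ℤ)) (n : ℤ),
          psiDE' a b ((j : ℝ) * (Real.log (2 * d * n) / n))
      ≤ Real.pi * d / (2 * Real.exp 1) * (b - a) + (b - a) := by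
  have hn0 : (0:ℝ) < n := by exact_mod_cast hn
  set h := Real.log (2 * d * n) / n with hhdef
  have hL0 : 0 < Real.log (2 * d * n) := Real.log_pos h2dn
  have hh : 0 < h := div_pos hL0 hn0
  set g : ℤ → ℝ := fun j => psiDE' a b ((j : ℝ) * h) with hg
  have hsplit : Finset.Icc (-(n:ℤ)) (n:ℤ) = Finset.Icc (-(n:ℤ)) (-1) ∪ Finset.Icc 0 (n:ℤ) := by
    ext j; simp only [Finset.mem_Icc, Finset.mem_union]; omega
  have hdisj : Disjoint (Finset.Icc (-(n:ℤ)) (-1)) (Finset.Icc 0 (n:ℤ)) := by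
    rw [Finset.disjoint_left]
    intro j hj hj2
    simp only [Finset.mem_Icc] at hj hj2
    omega
  have hneg : ∑ j ∈ Finset.Icc (-(n:ℤ)) (-1), g j = ∑ j ∈ Finset.Icc 1 (n:ℤ), g j := by
    have himg : Finset.Icc (-(n:ℤ)) (-1) = Finset.image Neg.neg (Finset.Icc 1 (n:ℤ)) := by
      ext j
      simp only [Finset.mem_image, Finset.mem_Icc]
      constructor
      · rintro ⟨h1, h2⟩; exact ⟨-j, ⟨by omega, by omega⟩, by omega⟩
      · rintro ⟨k, hk, rfl⟩; omega
    rw [himg, Finset.sum_image (by intro x _ y _ hxy; omega)]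
    apply Finset.sum_congr rfl
    intro j _
    show g (-j) = g j
    simp only [hg, Int.cast_neg, neg_mul]
    exact psiDE'_even a b _
  have hIcc0 : Finset.Icc (0:ℤ) (n:ℤ) = insert 0 (Finset.Icc 1 (n:ℤ)) := by
    ext j; simp only [Finset.mem_Icc, Finset.mem_insert]; omega
  have h0notin : (0:ℤ) ∉ Finset.Icc 1 (n:ℤ) := by simp
  have hre : ∑ j ∈ Finset.Icc 1 (n:ℤ), g j = ∑ i ∈ Finset.range n, g ((i:ℤ) + 1) := by
    have himg : Finset.Icc 1 (n:ℤ) = Finset.image (fun i : ℕ => (i:ℤ) + 1) (Finset.range n) := by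
      ext j
      simp only [Finset.mem_image, Finset.mem_Icc, Finset.mem_range]
      constructor
      · rintro ⟨h1, h2⟩; exact ⟨(j - 1).toNat, by omega, by omega⟩
      · rintro ⟨k, hk, rfl⟩; omega
    rw [himg, Finset.sum_image (by intro x _ y _ hxy; simp only at hxy; omega)]
  have hsum : ∑ j ∈ Finset.Icc (-(n:ℤ)) (n:ℤ), g j
      = g 0 + 2 * ∑ i ∈ Finset.range n, g ((i:ℤ) + 1) := by
    rw [hsplit, Finset.sum_union hdisj, hneg, hIcc0, Finset.sum_insert h0notin, hre]
    ring
  rw [hsum]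
  -- analytic bounds
  have hcont : Continuous (psiDE' a b) :=
    Differentiable.continuous fun x => (hasDerivAt_psiDE' a b x).differentiableAt
  have hanti := antitoneOn_psiDE' a b hab
  set F : ℝ → ℝ := fun u => (b - a) / 2 * Real.tanh (Real.pi / 2 * Real.sinh u) with hF
  have step : ∀ i : ℕ, h * g ((i:ℤ) + 1) ≤ F (((i:ℝ) + 1) * h) - F ((i:ℝ) * h) := by
    intro i
    have hle : (i:ℝ) * h ≤ ((i:ℝ) + 1) * h := by nlinarith
    have hftc : ∫ x in ((i:ℝ)*h)..(((i:ℝ)+1)*h), psiDE' a b x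
        = F (((i:ℝ)+1)*h) - F ((i:ℝ)*h) :=
      intervalIntegral.integral_eq_sub_of_hasDerivAt
        (fun x _ => hasDerivAt_psiDE a b x) (hcont.intervalIntegrable _ _)
    have hmono : ∫ _x in ((i:ℝ)*h)..(((i:ℝ)+1)*h), psiDE' a b (((i:ℝ)+1)*h)
        ≤ ∫ x in ((i:ℝ)*h)..(((i:ℝ)+1)*h), psiDE' a b x := by
      apply intervalIntegral.integral_mono_on hle (intervalIntegrable_const)
        (hcont.intervalIntegrable _ _)
      intro x hx
      have h1 : x ∈ Set.Ici (0:ℝ) := by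
        have : 0 ≤ (i:ℝ) * h := by positivity
        exact Set.mem_Ici.mpr (le_trans this hx.1)
      have h2 : ((i:ℝ)+1)*h ∈ Set.Ici (0:ℝ) := Set.mem_Ici.mpr (by positivity)
      exact hanti h1 h2 hx.2
    rw [intervalIntegral.integral_const, smul_eq_mul] at hmono
    have : (((i:ℝ)+1)*h - (i:ℝ)*h) = h := by ring
    rw [this] at hmono
    have hgi : g ((i:ℤ) + 1) = psiDE' a b (((i:ℝ)+1)*h) := by
      simp only [hg]; push_cast; ring_nf
    rw [hgi]
    linarith [hftc ▸ hmono]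
  have htel : ∑ i ∈ Finset.range n, (F (((i:ℝ) + 1) * h) - F ((i:ℝ) * h))
      = F ((n:ℝ) * h) - F 0 := by
    have := Finset.sum_range_sub (fun i : ℕ => F ((i:ℝ) * h)) n
    push_cast at this
    simpa using this
  have hsum2 : ∑ i ∈ Finset.range n, h * g ((i:ℤ) + 1) ≤ F ((n:ℝ) * h) - F 0 := by
    calc ∑ i ∈ Finset.range n, h * g ((i:ℤ) + 1)
        ≤ ∑ i ∈ Finset.range n, (F (((i:ℝ) + 1) * h) - F ((i:ℝ) * h)) :=
          Finset.sum_le_sum fun i _ => step i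
      _ = F ((n:ℝ) * h) - F 0 := htel
  have hF0 : F 0 = 0 := by simp [hF]
  have hFle : F ((n:ℝ) * h) ≤ (b - a) / 2 := by
    have ht : Real.tanh (Real.pi / 2 * Real.sinh ((n:ℝ) * h)) ≤ 1 := by
      rw [Real.tanh_eq_sinh_div_cosh]
      exact (div_le_one (Real.cosh_pos _)).mpr (Real.sinh_lt_cosh _).le
    have hba : (0:ℝ) ≤ (b - a) / 2 := by linarith
    calc F ((n:ℝ) * h) = (b - a) / 2 * Real.tanh (Real.pi / 2 * Real.sinh ((n:ℝ)*h)) := rfl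
      _ ≤ (b - a) / 2 * 1 := mul_le_mul_of_nonneg_left ht hba
      _ = (b - a) / 2 := mul_one _
  have hg0 : g 0 = (b - a) * Real.pi / 4 := by
    simp only [hg, Int.cast_zero, zero_mul]; exact psiDE'_zero a b
  have hhb : h ≤ 2 * d / Real.exp 1 := by
    have he := Real.add_one_le_exp (Real.log (2*d*n) - 1)
    rw [Real.exp_sub, Real.exp_log (by linarith : (0:ℝ) < 2*d*n)] at he
    rw [hhdef, div_le_div_iff₀ hn0 (Real.exp_pos 1)]
    have h1 : Real.log (2*d*n) ≤ 2*d*n / Real.exp 1 := by linarith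
    have := mul_le_mul_of_nonneg_right h1 (Real.exp_pos 1).le
    rw [div_mul_cancel₀ _ (Real.exp_pos 1).ne'] at this
    linarith
  have e1 : h * g 0 ≤ Real.pi * d / (2 * Real.exp 1) * (b - a) := by
    rw [hg0]
    have hba : (0:ℝ) ≤ (b - a) * Real.pi / 4 := by have := Real.pi_pos; nlinarith
    calc h * ((b - a) * Real.pi / 4)
        ≤ (2 * d / Real.exp 1) * ((b - a) * Real.pi / 4) :=
          mul_le_mul_of_nonneg_right hhb hba
      _ = Real.pi * d / (2 * Real.exp 1) * (b - a) := by
          field_simp; ring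
  have e2 : h * (2 * ∑ i ∈ Finset.range n, g ((i:ℤ) + 1)) ≤ b - a := by
    have hrw : h * (2 * ∑ i ∈ Finset.range n, g ((i:ℤ) + 1))
        = 2 * (h * ∑ i ∈ Finset.range n, g ((i:ℤ) + 1)) := by ring
    rw [hrw, Finset.mul_sum]
    have := hsum2
    rw [hF0] at this
    linarith
  calc h * (g 0 + 2 * ∑ i ∈ Finset.range n, g ((i:ℤ) + 1))
      = h * g 0 + h * (2 * ∑ i ∈ Finset.range n, g ((i:ℤ) + 1)) := by ring
    _ ≤ Real.pi * d / (2 * Real.exp 1) * (b - a) + (b - a) := add_le_add e1 e2
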